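/- Suppose all hospitals have binary OXS valuations and doctors have strict complete preference orders. Let X be the HWSD-optimal allocation. Fix a hospital h and a subset T ⊆ X_h, and define f_T(S) = |S ∩ T| for S ⊆ D. Let Y be the HWSD-optimal allocation for the profile in which v_h is replaced by f_T (all other hospital valuations and all doctor preferences unchanged). Then Y_h = T. -/

import Mathlib

open Finset

/-- A matroid rank function on subsets of a finite ground set. -/
def IsMRF {α : Type*} [DecidableEq α] (v : Finset α → ℤ) : Prop :=
  v ∅ = 0 ∧
  (∀ (S : Finset α) (d : α), d ∉ S →
    v (insert d S) - v S = 0 ∨ v (insert d S) - v S = 1) ∧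
  (∀ (S T : Finset α) (d : α), S ⊆ T → d ∉ T →
    v (insert d T) - v T ≤ v (insert d S) - v S)

/-- The bundle of doctors assigned to hospital `h` under allocation `X`. -/
def bundle {n m : ℕ} (X : Fin m → Option (Fin n)) (h : Fin n) : Finset (Fin m) :=
  Finset.univ.filter (fun d => X d = some h)

/-- An allocation is non-redundant if every hospital's bundle is independent. -/
def NonRedundant {n m : ℕ} (v : Fin n → Finset (Fin m) → ℤ)
    (X : Fin m → Option (Fin n)) : Prop :=
  ∀ h, v h (bundle X h) = (bundle X h).card

/-- Hospital utilitarian welfare. -/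
def USW {n m : ℕ} (v : Fin n → Finset (Fin m) → ℤ) (X : Fin m → Option (Fin n)) : ℤ :=
  ∑ h, v h (bundle X h)

/-- Doctor `d` strictly prefers the first outcome to the second; every hospital is
strictly preferred to being unallocated (`none`). -/
def OptStrictPref {n m : ℕ} (P : Fin m → Fin n → Fin n → Prop) (d : Fin m) :
    Option (Fin n) → Option (Fin n) → Prop
  | some h, some h' => P d h h'
  | some _, none => True
  | none, _ => False

/-- `(h, S)` is a blocking pair for `X`. -/
def IsBlockingPair {n m : ℕ} (v : Fin n → Finset (Fin m) → ℤ)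
    (P : Fin m → Fin n → Fin n → Prop) (X : Fin m → Option (Fin n))
    (h : Fin n) (S : Finset (Fin m)) : Prop :=
  v h S = S.card ∧ v h (bundle X h) < v h S ∧
    ∀ d ∈ S, X d = some h ∨ OptStrictPref P d (some h) (X d)

/-- An allocation is stable if it is non-redundant and admits no blocking pair. -/
def Stable {n m : ℕ} (v : Fin n → Finset (Fin m) → ℤ)
    (P : Fin m → Fin n → Fin n → Prop) (X : Fin m → Option (Fin n)) : Prop :=
  NonRedundant v X ∧ ¬ ∃ h S, IsBlockingPair v P X h S

/-- The HWSD ordering on non-redundant allocations: `X` beats `Y`. -/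
def HWSDgt {n m : ℕ} (v : Fin n → Finset (Fin m) → ℤ)
    (P : Fin m → Fin n → Fin n → Prop) (X Y : Fin m → Option (Fin n)) : Prop :=
  USW v Y < USW v X ∨
  (USW v X = USW v Y ∧ ∃ j : Fin m,
    OptStrictPref P j (X j) (Y j) ∧ ∀ k : Fin m, k < j → X k = Y k)

/-- `X` is the HWSD-optimal allocation: the greatest non-redundant allocation in the
HWSD ordering (the output of the High Welfare Serial Dictatorship mechanism). -/
def IsHWSDOpt {n m : ℕ} (v : Fin n → Finset (Fin m) → ℤ)
    (P : Fin m → Fin n → Fin n → Prop) (X : Fin m → Option (Fin n)) : Prop :=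
  NonRedundant v X ∧ ∀ Y, NonRedundant v Y → Y ≠ X → HWSDgt v P X Y

/-- A binary OXS valuation: `v S` is the size of a maximum matching of `S` into a
finite set of slots in a bipartite graph. -/
def IsBinaryOXS {α : Type*} (v : Finset α → ℤ) : Prop :=
  ∃ (k : ℕ) (E : α → Fin k → Prop),
    ∀ S : Finset α,
      IsGreatest {r : ℤ | ∃ M : Finset (α × Fin k),
        (∀ p ∈ M, p.1 ∈ S ∧ E p.1 p.2) ∧
        (∀ p ∈ M, ∀ q ∈ M, p.1 = q.1 → p = q) ∧
        (∀ p ∈ M, ∀ q ∈ M, p.2 = q.2 → p = q) ∧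
        (M.card : ℤ) = r} (v S)
open Finset

namespace HWSDProof

variable {n m : ℕ}

/-- Global edges: a slot of some hospital together with a doctor. -/
abbrev Edge (k : Fin n → ℕ) := Σ g : Fin n, Fin m × Fin (k g)

variable {k : Fin n → ℕ}

def doc (e : Edge (m := m) k) : Fin m := e.2.1

def sameSlot (e f : Edge (m := m) k) : Prop := e.1 = f.1 ∧ ((e.2.2 : ℕ) = (f.2.2 : ℕ))

lemma sameSlot_refl (e : Edge (m := m) k) : sameSlot e e := ⟨rfl, rfl⟩

lemma sameSlot_symm {e f : Edge (m := m) k} (h : sameSlot e f) : sameSlot f e :=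
  ⟨h.1.symm, h.2.symm⟩

/-- `MM` is a matching respecting the availability relations `E`. -/
def IsM (E : ∀ g : Fin n, Fin m → Fin (k g) → Prop) (MM : Finset (Edge (m := m) k)) : Prop :=
  (∀ e ∈ MM, E e.1 e.2.1 e.2.2) ∧
  (∀ e ∈ MM, ∀ f ∈ MM, doc e = doc f → e = f) ∧
  (∀ e ∈ MM, ∀ f ∈ MM, sameSlot e f → e = f)

noncomputable def alloc (MM : Finset (Edge (m := m) k)) (d : Fin m) : Option (Fin n) :=
  if hc : ∃ e, e ∈ MM ∧ doc e = d then some hc.choose.1 else none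

lemma alloc_eq_some_of_mem {E} {MM : Finset (Edge (m := m) k)} (hM : IsM E MM)
    {e : Edge (m := m) k} (he : e ∈ MM) : alloc MM (doc e) = some e.1 := by
  have hc : ∃ f, f ∈ MM ∧ doc f = doc e := ⟨e, he, rfl⟩
  have hspec := hc.choose_spec
  have heq : hc.choose = e := hM.2.1 _ hspec.1 _ he hspec.2
  unfold alloc
  rw [dif_pos hc, heq]

lemma alloc_eq_none {MM : Finset (Edge (m := m) k)} {d : Fin m}
    (h : ∀ e ∈ MM, doc e ≠ d) : alloc MM d = none := by
  have hc : ¬ ∃ e, e ∈ MM ∧ doc e = d := by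
    rintro ⟨e, he, hd⟩; exact h e he hd
  unfold alloc
  rw [dif_neg hc]

lemma exists_of_alloc_eq_some {MM : Finset (Edge (m := m) k)} {d : Fin m} {g : Fin n}
    (h : alloc MM d = some g) : ∃ e ∈ MM, doc e = d ∧ e.1 = g := by
  by_cases hc : ∃ e, e ∈ MM ∧ doc e = d
  · refine ⟨hc.choose, hc.choose_spec.1, hc.choose_spec.2, ?_⟩
    unfold alloc at h
    rw [dif_pos hc] at h
    exact Option.some_injective _ h
  · unfold alloc at h
    rw [dif_neg hc] at h
    exact absurd h (by simp)

lemma alloc_congr {E₁ E₂} {MM₁ MM₂ : Finset (Edge (m := m) k)}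
    (h₁ : IsM E₁ MM₁) (h₂ : IsM E₂ MM₂) {d : Fin m}
    (h : ∀ e, (e ∈ MM₁ ∧ doc e = d) ↔ (e ∈ MM₂ ∧ doc e = d)) :
    alloc MM₁ d = alloc MM₂ d := by
  by_cases hc : ∃ e, e ∈ MM₁ ∧ doc e = d
  · obtain ⟨e, he, hd⟩ := hc
    have he₂ : e ∈ MM₂ := ((h e).1 ⟨he, hd⟩).1
    rw [← hd, alloc_eq_some_of_mem h₁ he, alloc_eq_some_of_mem h₂ he₂]
  · have hc₂ : ∀ e ∈ MM₂, doc e ≠ d := by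
      intro e he hd; exact hc ⟨e, (h e).2 ⟨he, hd⟩⟩
    rw [alloc_eq_none hc₂, alloc_eq_none (fun e he hd => hc ⟨e, he, hd⟩)]

lemma mem_bundle_alloc {E} {MM : Finset (Edge (m := m) k)} (hM : IsM E MM)
    {d : Fin m} {g : Fin n} :
    d ∈ bundle (alloc MM) g ↔ ∃ e ∈ MM, doc e = d ∧ e.1 = g := by
  constructor
  · intro hd
    have : alloc MM d = some g := by
      simpa [bundle] using hd
    exact exists_of_alloc_eq_some this
  · rintro ⟨e, he, hd, hg⟩
    have : alloc MM d = some g := by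
      rw [← hd, alloc_eq_some_of_mem hM he, hg]
    simp [bundle, this]

end HWSDProof
namespace HWSDProof

variable {n m : ℕ}

/-- The defining set of a binary OXS valuation. -/
def oxsSet (κ : ℕ) (Eg : Fin m → Fin κ → Prop) (S : Finset (Fin m)) : Set ℤ :=
  {r : ℤ | ∃ M : Finset (Fin m × Fin κ),
    (∀ p ∈ M, p.1 ∈ S ∧ Eg p.1 p.2) ∧
    (∀ p ∈ M, ∀ q ∈ M, p.1 = q.1 → p = q) ∧
    (∀ p ∈ M, ∀ q ∈ M, p.2 = q.2 → p = q) ∧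
    (M.card : ℤ) = r}

variable {κ : ℕ} {Eg : Fin m → Fin κ → Prop} {vg : Finset (Fin m) → ℤ}

lemma oxs_le_card (spec : ∀ S, IsGreatest (oxsSet κ Eg S) (vg S)) (S : Finset (Fin m)) :
    vg S ≤ (S.card : ℤ) := by
  obtain ⟨M₀, hprop, hdoc, -, hcard⟩ := (spec S).1
  rw [← hcard, Nat.cast_le]
  exact Finset.card_le_card_of_injOn Prod.fst (fun p hp => (hprop p hp).1)
    (fun p hp q hq hpq => hdoc p hp q hq hpq)

lemma oxs_ge (spec : ∀ S, IsGreatest (oxsSet κ Eg S) (vg S)) {S : Finset (Fin m)}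
    {W : Finset (Fin m × Fin κ)} (hprop : ∀ p ∈ W, p.1 ∈ S ∧ Eg p.1 p.2)
    (hdoc : ∀ p ∈ W, ∀ q ∈ W, p.1 = q.1 → p = q)
    (hslot : ∀ p ∈ W, ∀ q ∈ W, p.2 = q.2 → p = q) :
    (W.card : ℤ) ≤ vg S :=
  (spec S).2 ⟨W, hprop, hdoc, hslot, rfl⟩

/-- The doctors covered by a matching form an independent set. -/
lemma oxs_indep (spec : ∀ S, IsGreatest (oxsSet κ Eg S) (vg S))
    {W : Finset (Fin m × Fin κ)} (hE : ∀ p ∈ W, Eg p.1 p.2)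
    (hdoc : ∀ p ∈ W, ∀ q ∈ W, p.1 = q.1 → p = q)
    (hslot : ∀ p ∈ W, ∀ q ∈ W, p.2 = q.2 → p = q) :
    vg (W.image Prod.fst) = ((W.image Prod.fst).card : ℤ) := by
  have hcard : (W.image Prod.fst).card = W.card :=
    Finset.card_image_of_injOn (fun p hp q hq hpq => hdoc p hp q hq hpq)
  have h1 : (W.card : ℤ) ≤ vg (W.image Prod.fst) :=
    oxs_ge spec (fun p hp => ⟨Finset.mem_image_of_mem _ hp, hE p hp⟩) hdoc hslot
  have h2 := oxs_le_card spec (W.image Prod.fst)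
  rw [hcard] at h2 ⊢
  omega

/-- An independent set can be saturated by a matching. -/
lemma oxs_saturating (spec : ∀ S, IsGreatest (oxsSet κ Eg S) (vg S))
    {S : Finset (Fin m)} (hS : vg S = (S.card : ℤ)) :
    ∃ W : Finset (Fin m × Fin κ),
      (∀ p ∈ W, Eg p.1 p.2) ∧
      (∀ p ∈ W, ∀ q ∈ W, p.1 = q.1 → p = q) ∧
      (∀ p ∈ W, ∀ q ∈ W, p.2 = q.2 → p = q) ∧
      W.image Prod.fst = S := by
  obtain ⟨M₀, hprop, hdoc, hslot, hcard⟩ := (spec S).1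
  refine ⟨M₀, fun p hp => (hprop p hp).2, hdoc, hslot, ?_⟩
  have hsub : M₀.image Prod.fst ⊆ S := fun d hd => by
    obtain ⟨p, hp, rfl⟩ := Finset.mem_image.mp hd
    exact (hprop p hp).1
  have hc : (M₀.image Prod.fst).card = M₀.card :=
    Finset.card_image_of_injOn (fun p hp q hq hpq => hdoc p hp q hq hpq)
  have : M₀.card = S.card := by
    have := hS ▸ hcard
    exact_mod_cast this
  exact Finset.eq_of_subset_of_card_le hsub (by omega)

variable {k : Fin n → ℕ}

def localizeSet (g : Fin n) (MM : Finset (Edge (m := m) k)) :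
    Finset (Fin m × Fin (k g)) :=
  (MM.filter (fun e => e.1 = g)).attach.image
    (fun x => (x.1.2.1, ⟨(x.1.2.2 : ℕ), by
      have hx := Finset.mem_filter.mp x.2
      exact lt_of_lt_of_le x.1.2.2.isLt (le_of_eq (congrArg k hx.2))⟩))

lemma mem_localizeSet {g : Fin n} {MM : Finset (Edge (m := m) k)}
    {p : Fin m × Fin (k g)} :
    p ∈ localizeSet g MM ↔ ∃ e ∈ MM, e.1 = g ∧ doc e = p.1 ∧ ((e.2.2 : ℕ) = (p.2 : ℕ)) := by
  unfold localizeSet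
  rw [Finset.mem_image]
  constructor
  · rintro ⟨x, -, rfl⟩
    have hx := Finset.mem_filter.mp x.2
    exact ⟨x.1, hx.1, hx.2, rfl, rfl⟩
  · rintro ⟨e, he, hg, hd, hs⟩
    have hxm : e ∈ MM.filter (fun e => e.1 = g) := Finset.mem_filter.mpr ⟨he, hg⟩
    refine ⟨⟨e, hxm⟩, Finset.mem_attach _ _, ?_⟩
    exact Prod.ext hd (Fin.ext hs)

lemma localFin_E {E : ∀ g : Fin n, Fin m → Fin (k g) → Prop} {g : Fin n}
    {e : Edge (m := m) k} (he : e.1 = g) (hE : E e.1 e.2.1 e.2.2)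
    {s : Fin (k g)} (hs : (e.2.2 : ℕ) = (s : ℕ)) :
    E g e.2.1 s := by
  obtain ⟨g', d, s'⟩ := e
  cases he
  cases Fin.ext hs
  exact hE

def globalize (g : Fin n) (W : Finset (Fin m × Fin (k g))) : Finset (Edge (m := m) k) :=
  W.image (fun p => ⟨g, p⟩)

lemma mem_globalize {g : Fin n} {W : Finset (Fin m × Fin (k g))} {e : Edge (m := m) k} :
    e ∈ globalize g W ↔ ∃ p ∈ W, e = ⟨g, p⟩ := by
  constructor
  · intro he
    obtain ⟨p, hp, rfl⟩ := Finset.mem_image.mp he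
    exact ⟨p, hp, rfl⟩
  · rintro ⟨p, hp, rfl⟩
    exact Finset.mem_image_of_mem _ hp

end HWSDProof
namespace HWSDProof

variable {n m : ℕ} {k : Fin n → ℕ} {E : ∀ g : Fin n, Fin m → Fin (k g) → Prop}

lemma image_localizeSet {MM : Finset (Edge (m := m) k)} (hM : IsM E MM) (g : Fin n) :
    (localizeSet g MM).image Prod.fst = bundle (alloc MM) g := by
  ext d
  rw [Finset.mem_image, mem_bundle_alloc hM]
  constructor
  · rintro ⟨p, hp, rfl⟩
    obtain ⟨e, he, hg, hd, -⟩ := mem_localizeSet.mp hp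
    exact ⟨e, he, hd, hg⟩
  · rintro ⟨e, he, hd, hg⟩
    refine ⟨(d, ⟨(e.2.2 : ℕ), lt_of_lt_of_le e.2.2.isLt (le_of_eq (congrArg k hg))⟩),
      mem_localizeSet.mpr ⟨e, he, hg, hd, rfl⟩, rfl⟩

lemma val_bundle {MM : Finset (Edge (m := m) k)} (hM : IsM E MM) (g : Fin n)
    {vg : Finset (Fin m) → ℤ} (spec : ∀ S, IsGreatest (oxsSet (k g) (E g) S) (vg S)) :
    vg (bundle (alloc MM) g) = ((bundle (alloc MM) g).card : ℤ) := by
  rw [← image_localizeSet hM g]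
  refine oxs_indep spec ?_ ?_ ?_
  · intro p hp
    obtain ⟨e, he, hg, hd, hs⟩ := mem_localizeSet.mp hp
    have := hM.1 e he
    rw [← hd]
    exact localFin_E hg this hs
  · intro p hp q hq hpq
    obtain ⟨e, he, hge, hde, hse⟩ := mem_localizeSet.mp hp
    obtain ⟨f, hf, hgf, hdf, hsf⟩ := mem_localizeSet.mp hq
    have : e = f := hM.2.1 e he f hf (by rw [doc, doc] at *; rw [hde, hdf, hpq])
    subst this
    exact Prod.ext hpq (Fin.ext (by rw [← hse, hsf]))
  · intro p hp q hq hpq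
    obtain ⟨e, he, hge, hde, hse⟩ := mem_localizeSet.mp hp
    obtain ⟨f, hf, hgf, hdf, hsf⟩ := mem_localizeSet.mp hq
    have : e = f := hM.2.2 e he f hf ⟨hge.trans hgf.symm, by rw [hse, hsf, hpq]⟩
    subst this
    exact Prod.ext (hde.symm.trans hdf) hpq

lemma card_bundle_alloc {MM : Finset (Edge (m := m) k)} (hM : IsM E MM) (g : Fin n) :
    (bundle (alloc MM) g).card = (MM.filter (fun e => e.1 = g)).card := by
  symm
  refine Finset.card_bij (fun e _ => doc e) ?_ ?_ ?_
  · intro e he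
    have he' := Finset.mem_filter.mp he
    exact (mem_bundle_alloc hM).mpr ⟨e, he'.1, rfl, he'.2⟩
  · intro e he f hf hef
    exact hM.2.1 e (Finset.mem_filter.mp he).1 f (Finset.mem_filter.mp hf).1 hef
  · intro d hd
    obtain ⟨e, he, hde, hge⟩ := (mem_bundle_alloc hM).mp hd
    exact ⟨e, Finset.mem_filter.mpr ⟨he, hge⟩, hde⟩

lemma usw_alloc {MM : Finset (Edge (m := m) k)} (hM : IsM E MM)
    {w : Fin n → Finset (Fin m) → ℤ} (hNR : NonRedundant w (alloc MM)) :
    USW w (alloc MM) = (MM.card : ℤ) := by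
  unfold USW
  have h1 : ∀ g, w g (bundle (alloc MM) g) = ((MM.filter (fun e => e.1 = g)).card : ℤ) := by
    intro g
    rw [hNR g, card_bundle_alloc hM g]
  rw [Finset.sum_congr rfl (fun g _ => h1 g)]
  rw [← Nat.cast_sum]
  congr 1
  exact (Finset.card_eq_sum_card_fiberwise (fun e _ => Finset.mem_univ e.1)).symm

lemma mem_biUnion_globalize {W : ∀ g : Fin n, Finset (Fin m × Fin (k g))}
    {e : Edge (m := m) k} :
    e ∈ Finset.univ.biUnion (fun g => globalize g (W g)) ↔ e.2 ∈ W e.1 := by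
  rw [Finset.mem_biUnion]
  constructor
  · rintro ⟨g, -, hg⟩
    obtain ⟨p, hp, rfl⟩ := mem_globalize.mp hg
    exact hp
  · intro he
    exact ⟨e.1, Finset.mem_univ _, mem_globalize.mpr ⟨e.2, he, (Sigma.eta e).symm⟩⟩

/-- Building a global matching realizing a given allocation. -/
lemma build_global {Z : Fin m → Option (Fin n)} {W : ∀ g : Fin n, Finset (Fin m × Fin (k g))}
    (hE : ∀ g, ∀ p ∈ W g, E g p.1 p.2)
    (hdoc : ∀ g, ∀ p ∈ W g, ∀ q ∈ W g, p.1 = q.1 → p = q)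
    (hslot : ∀ g, ∀ p ∈ W g, ∀ q ∈ W g, p.2 = q.2 → p = q)
    (himg : ∀ g, (W g).image Prod.fst = bundle Z g) :
    IsM E (Finset.univ.biUnion (fun g => globalize g (W g))) ∧
      alloc (Finset.univ.biUnion (fun g => globalize g (W g))) = Z := by
  set MG := Finset.univ.biUnion (fun g => globalize g (W g)) with hMG
  have hbd : ∀ e : Edge (m := m) k, e ∈ MG → Z (doc e) = some e.1 := by
    intro e he
    have h2 : e.2 ∈ W e.1 := mem_biUnion_globalize.mp he
    have : doc e ∈ bundle Z e.1 := by
      rw [← himg e.1]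
      exact Finset.mem_image_of_mem _ h2
    simpa [bundle] using this
  have hIsM : IsM E MG := by
    refine ⟨?_, ?_, ?_⟩
    · intro e he
      exact hE e.1 e.2 (mem_biUnion_globalize.mp he)
    · intro e he f hf hef
      have h1 := hbd e he
      have h2 := hbd f hf
      rw [hef, h2] at h1
      have hg : e.1 = f.1 := (Option.some.injEq _ _ ▸ h1 : f.1 = e.1).symm
      obtain ⟨g1, p⟩ := e
      obtain ⟨g2, q⟩ := f
      cases hg
      have : p = q := hdoc g1 p (mem_biUnion_globalize.mp he) q (mem_biUnion_globalize.mp hf) hef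
      rw [this]
    · intro e he f hf hef
      obtain ⟨hg, hs⟩ := hef
      obtain ⟨g1, p⟩ := e
      obtain ⟨g2, q⟩ := f
      cases hg
      have : p = q := hslot g1 p (mem_biUnion_globalize.mp he) q (mem_biUnion_globalize.mp hf)
        (Fin.ext hs)
      rw [this]
  refine ⟨hIsM, ?_⟩
  funext d
  cases hZ : Z d with
  | none =>
    refine alloc_eq_none ?_
    intro e he hd
    have hb := hbd e he
    rw [hd, hZ] at hb
    cases hb
  | some g =>
    have : d ∈ bundle Z g := by simp [bundle, hZ]
    rw [← himg g] at this
    obtain ⟨p, hp, rfl⟩ := Finset.mem_image.mp this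
    have hmem : (⟨g, p⟩ : Edge (m := m) k) ∈ MG := mem_biUnion_globalize.mpr hp
    exact alloc_eq_some_of_mem hIsM hmem

end HWSDProof
namespace HWSDProof

variable {n m : ℕ} {k : Fin n → ℕ} {E : ∀ g : Fin n, Fin m → Fin (k g) → Prop}

lemma sameSlot_trans {e f g : Edge (m := m) k} (h1 : sameSlot e f) (h2 : sameSlot f g) :
    sameSlot e g := ⟨h1.1.trans h2.1, h1.2.trans h2.2⟩

open scoped Classical in
noncomputable def step (M N : Finset (Edge (m := m) k)) (e : Edge (m := m) k) :
    Option (Edge (m := m) k) :=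
  if e ∈ M then
    (if hc : ∃ f, f ∈ N ∧ doc f = doc e then some hc.choose else none)
  else
    (if hc : ∃ f, f ∈ M ∧ sameSlot f e then some hc.choose else none)

noncomputable def iter (M N : Finset (Edge (m := m) k)) (seed : Edge (m := m) k) :
    ℕ → Option (Edge (m := m) k)
  | 0 => some seed
  | j+1 => (iter M N seed j).bind (step M N)

def inP (M N : Finset (Edge (m := m) k)) (seed : Edge (m := m) k)
    (e : Edge (m := m) k) : Prop := ∃ j, iter M N seed j = some e

section Orbit

variable {M N : Finset (Edge (m := m) k)} {seed : Edge (m := m) k}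

lemma stepMN (hM : IsM E M) (hN : IsM E N) {e f : Edge (m := m) k}
    (heM : e ∈ M) (heN : e ∉ N) (hst : step M N e = some f) :
    f ∈ N ∧ f ∉ M ∧ doc f = doc e := by
  unfold step at hst
  rw [if_pos heM] at hst
  by_cases hc : ∃ f, f ∈ N ∧ doc f = doc e
  · rw [dif_pos hc] at hst
    have heq : hc.choose = f := Option.some_injective _ hst
    obtain ⟨hfN, hfd⟩ := hc.choose_spec
    rw [heq] at hfN hfd
    refine ⟨hfN, ?_, hfd⟩
    intro hfM
    exact heN (hM.2.1 f hfM e heM hfd ▸ hfN)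
  · rw [dif_neg hc] at hst
    cases hst

lemma stepMN_eq (hN : IsM E N) {e f : Edge (m := m) k}
    (heM : e ∈ M) (hfN : f ∈ N) (hfd : doc f = doc e) :
    step M N e = some f := by
  unfold step
  rw [if_pos heM]
  have hc : ∃ f, f ∈ N ∧ doc f = doc e := ⟨f, hfN, hfd⟩
  rw [dif_pos hc]
  congr 1
  exact hN.2.1 _ hc.choose_spec.1 f hfN (hc.choose_spec.2.trans hfd.symm)

lemma stepNM (hM : IsM E M) (hN : IsM E N) {e f : Edge (m := m) k}
    (heN : e ∈ N) (heM : e ∉ M) (hst : step M N e = some f) :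
    f ∈ M ∧ f ∉ N ∧ sameSlot f e := by
  unfold step at hst
  rw [if_neg heM] at hst
  by_cases hc : ∃ f, f ∈ M ∧ sameSlot f e
  · rw [dif_pos hc] at hst
    have heq : hc.choose = f := Option.some_injective _ hst
    obtain ⟨hfM, hfs⟩ := hc.choose_spec
    rw [heq] at hfM hfs
    refine ⟨hfM, ?_, hfs⟩
    intro hfN
    exact heM (hN.2.2 f hfN e heN hfs ▸ hfM)
  · rw [dif_neg hc] at hst
    cases hst

lemma stepNM_eq (hM : IsM E M) {e f : Edge (m := m) k}
    (heM : e ∉ M) (hfM : f ∈ M) (hfs : sameSlot f e) :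
    step M N e = some f := by
  unfold step
  rw [if_neg heM]
  have hc : ∃ f, f ∈ M ∧ sameSlot f e := ⟨f, hfM, hfs⟩
  rw [dif_pos hc]
  congr 1
  exact hM.2.2 _ hc.choose_spec.1 f hfM (sameSlot_trans hc.choose_spec.2 (sameSlot_symm hfs))

lemma inP_seed : inP M N seed seed := ⟨0, rfl⟩

lemma inP_succ {e : Edge (m := m) k} {j : ℕ} (hj : iter M N seed (j+1) = some e) :
    ∃ e', iter M N seed j = some e' ∧ step M N e' = some e := by
  unfold iter at hj
  cases hit : iter M N seed j with
  | none => rw [hit] at hj; simp at hj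
  | some e' => rw [hit] at hj; exact ⟨e', rfl, hj⟩

lemma inP_sides (hM : IsM E M) (hN : IsM E N)
    (hseedM : seed ∈ M) (hseedN : seed ∉ N) {e : Edge (m := m) k}
    (he : inP M N seed e) : (e ∈ M ∧ e ∉ N) ∨ (e ∈ N ∧ e ∉ M) := by
  obtain ⟨j, hj⟩ := he
  induction j generalizing e with
  | zero =>
    obtain rfl : seed = e := Option.some_injective _ hj
    exact Or.inl ⟨hseedM, hseedN⟩
  | succ j ih =>
    obtain ⟨e', hit, hst⟩ := inP_succ hj
    rcases ih hit with ⟨h1, h2⟩ | ⟨h1, h2⟩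
    · obtain ⟨ha, hb, -⟩ := stepMN hM hN h1 h2 hst
      exact Or.inr ⟨ha, hb⟩
    · obtain ⟨ha, hb, -⟩ := stepNM hM hN h1 h2 hst
      exact Or.inl ⟨ha, hb⟩

/-- Closure of the orbit under adjacency. -/
lemma inP_closed (hM : IsM E M) (hN : IsM E N)
    (hseedM : seed ∈ M) (hseedN : seed ∉ N)
    (hexp : ∀ f ∈ N, ¬ sameSlot f seed)
    {e f : Edge (m := m) k} (he : inP M N seed e)
    (hf : f ∈ M ∨ f ∈ N) (hfe : f ≠ e)
    (hadj : doc f = doc e ∨ sameSlot f e) : inP M N seed f := by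
  rcases inP_sides hM hN hseedM hseedN he with ⟨heM, heN⟩ | ⟨heN, heM⟩
  · rcases hadj with hd | hs
    · -- same doctor; f must be the N-successor
      have hfN : f ∈ N := by
        rcases hf with hfM | hfN
        · exact absurd (hM.2.1 f hfM e heM hd) hfe
        · exact hfN
      obtain ⟨j, hj⟩ := he
      refine ⟨j+1, ?_⟩
      unfold iter
      rw [hj]
      exact stepMN_eq hN heM hfN hd
    · -- same slot; f must be the predecessor
      have hfN : f ∈ N := by
        rcases hf with hfM | hfN
        · exact absurd (hM.2.2 f hfM e heM hs) hfe
        · exact hfN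
      obtain ⟨j, hj⟩ := he
      cases j with
      | zero =>
        obtain rfl : seed = e := Option.some_injective _ hj
        exact absurd hs (hexp f hfN)
      | succ j =>
        obtain ⟨e', hit, hst⟩ := inP_succ hj
        rcases inP_sides hM hN hseedM hseedN ⟨j, hit⟩ with ⟨h1, h2⟩ | ⟨h1, h2⟩
        · obtain ⟨ha, -, -⟩ := stepMN hM hN h1 h2 hst
          exact absurd ha heN
        · obtain ⟨-, -, hs'⟩ := stepNM hM hN h1 h2 hst
          have : f = e' := hN.2.2 f hfN e' h1 (sameSlot_trans hs hs')
          exact this ▸ ⟨j, hit⟩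
  · rcases hadj with hd | hs
    · -- same doctor; f must be the predecessor
      have hfM : f ∈ M := by
        rcases hf with hfM | hfN
        · exact hfM
        · exact absurd (hN.2.1 f hfN e heN hd) hfe
      obtain ⟨j, hj⟩ := he
      cases j with
      | zero =>
        obtain rfl : seed = e := Option.some_injective _ hj
        exact absurd heM (fun _ => heM hseedM)
      | succ j =>
        obtain ⟨e', hit, hst⟩ := inP_succ hj
        rcases inP_sides hM hN hseedM hseedN ⟨j, hit⟩ with ⟨h1, h2⟩ | ⟨h1, h2⟩
        · obtain ⟨-, -, hd'⟩ := stepMN hM hN h1 h2 hst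
          have : f = e' := hM.2.1 f hfM e' h1 (hd.trans hd')
          exact this ▸ ⟨j, hit⟩
        · obtain ⟨ha, -, -⟩ := stepNM hM hN h1 h2 hst
          exact absurd ha heM
    · -- same slot; f must be the M-successor
      have hfM : f ∈ M := by
        rcases hf with hfM | hfN
        · exact hfM
        · exact absurd (hN.2.2 f hfN e heN hs) hfe
      obtain ⟨j, hj⟩ := he
      refine ⟨j+1, ?_⟩
      unfold iter
      rw [hj]
      exact stepNM_eq hM heM hfM hs

/-- Any orbit edge of `M` whose slot is `N`-exposed must be the seed. -/
lemma inP_noseed (hM : IsM E M) (hN : IsM E N)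
    (hseedM : seed ∈ M) (hseedN : seed ∉ N)
    {e : Edge (m := m) k} (he : inP M N seed e) (heM : e ∈ M)
    (hexp : ∀ f ∈ N, ¬ sameSlot f e) : e = seed := by
  obtain ⟨j, hj⟩ := he
  cases j with
  | zero => exact (Option.some_injective _ hj).symm
  | succ j =>
    obtain ⟨e', hit, hst⟩ := inP_succ hj
    rcases inP_sides hM hN hseedM hseedN ⟨j, hit⟩ with ⟨h1, h2⟩ | ⟨h1, h2⟩
    · obtain ⟨ha, hb, -⟩ := stepMN hM hN h1 h2 hst
      exact absurd heM hb
    · obtain ⟨-, -, hs'⟩ := stepNM hM hN h1 h2 hst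
      exact absurd (sameSlot_symm hs') (hexp e' h1)

end Orbit

end HWSDProof
namespace HWSDProof

variable {n m : ℕ} {k : Fin n → ℕ} {E : ∀ g : Fin n, Fin m → Fin (k g) → Prop}

open scoped Classical in
noncomputable def flip (M N : Finset (Edge (m := m) k)) (Q : Edge (m := m) k → Prop) :
    Finset (Edge (m := m) k) :=
  M.filter (fun e => ¬ Q e) ∪ N.filter (fun e => Q e)

section Flip

variable {M N : Finset (Edge (m := m) k)} {Q : Edge (m := m) k → Prop}

lemma mem_flip {e : Edge (m := m) k} :
    e ∈ flip M N Q ↔ (e ∈ M ∧ ¬ Q e) ∨ (e ∈ N ∧ Q e) := by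
  classical
  unfold flip
  simp only [Finset.mem_union, Finset.mem_filter]
  all_goals tauto

variable (hM : IsM E M) (hN : IsM E N)
  (hcl : ∀ {e f : Edge (m := m) k}, Q e → (f ∈ M ∨ f ∈ N) → f ≠ e →
    (doc f = doc e ∨ sameSlot f e) → Q f)

include hM hN hcl in
lemma flip_isM : IsM E (flip M N Q) := by
  refine ⟨?_, ?_, ?_⟩
  · intro e he
    rcases mem_flip.mp he with ⟨h1, -⟩ | ⟨h1, -⟩
    · exact hM.1 e h1
    · exact hN.1 e h1
  · intro e he f hf hd
    rcases mem_flip.mp he with ⟨h1, h2⟩ | ⟨h1, h2⟩ <;>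
      rcases mem_flip.mp hf with ⟨h3, h4⟩ | ⟨h3, h4⟩
    · exact hM.2.1 e h1 f h3 hd
    · by_cases hef : e = f
      · exact hef
      · exact absurd (hcl h4 (Or.inl h1) hef (Or.inl hd)) h2
    · by_cases hef : e = f
      · exact hef
      · exact absurd (hcl h2 (Or.inl h3) (Ne.symm hef) (Or.inl hd.symm)) h4
    · exact hN.2.1 e h1 f h3 hd
  · intro e he f hf hs
    rcases mem_flip.mp he with ⟨h1, h2⟩ | ⟨h1, h2⟩ <;>
      rcases mem_flip.mp hf with ⟨h3, h4⟩ | ⟨h3, h4⟩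
    · exact hM.2.2 e h1 f h3 hs
    · by_cases hef : e = f
      · exact hef
      · exact absurd (hcl h4 (Or.inl h1) hef (Or.inr hs)) h2
    · by_cases hef : e = f
      · exact hef
      · exact absurd (hcl h2 (Or.inl h3) (Ne.symm hef) (Or.inr (sameSlot_symm hs))) h4
    · exact hN.2.2 e h1 f h3 hs

include hM hN hcl in
lemma alloc_flip_of_not {d : Fin m} (hdQ : ∀ e, Q e → doc e ≠ d) :
    alloc (flip M N Q) d = alloc M d := by
  refine alloc_congr (flip_isM hM hN @hcl) hM ?_
  intro e
  constructor
  · rintro ⟨he, hd⟩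
    rcases mem_flip.mp he with ⟨h1, -⟩ | ⟨-, h2⟩
    · exact ⟨h1, hd⟩
    · exact absurd hd (hdQ e h2)
  · rintro ⟨he, hd⟩
    have : ¬ Q e := fun hQ => hdQ e hQ hd
    exact ⟨mem_flip.mpr (Or.inl ⟨he, this⟩), hd⟩

include hM hN hcl in
lemma alloc_flip_of_mem {d : Fin m} {e₀ : Edge (m := m) k} (he₀ : Q e₀)
    (he₀MN : e₀ ∈ M ∨ e₀ ∈ N) (hd : doc e₀ = d) :
    alloc (flip M N Q) d = alloc N d := by
  have key : ∀ e, (e ∈ M ∨ e ∈ N) → doc e = d → Q e := by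
    intro e heMN hde
    by_cases hee : e = e₀
    · exact hee ▸ he₀
    · exact hcl he₀ heMN hee (Or.inl (hde.trans hd.symm))
  refine alloc_congr (flip_isM hM hN @hcl) hN ?_
  intro e
  constructor
  · rintro ⟨he, hde⟩
    rcases mem_flip.mp he with ⟨h1, h2⟩ | ⟨h1, -⟩
    · exact absurd (key e (Or.inl h1) hde) h2
    · exact ⟨h1, hde⟩
  · rintro ⟨he, hde⟩
    exact ⟨mem_flip.mpr (Or.inr ⟨he, key e (Or.inr he) hde⟩), hde⟩

open scoped Classical in
lemma flip_card :
    (flip M N Q).card + (M.filter (fun e => Q e)).card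
      = M.card + (N.filter (fun e => Q e)).card := by
  have hdisj : Disjoint (M.filter (fun e => ¬ Q e)) (N.filter (fun e => Q e)) := by
    rw [Finset.disjoint_left]
    intro e he hf
    exact (Finset.mem_filter.mp he).2 (Finset.mem_filter.mp hf).2
  have h1 : (flip M N Q).card
      = (M.filter (fun e => ¬ Q e)).card + (N.filter (fun e => Q e)).card := by
    unfold flip
    exact Finset.card_union_of_disjoint hdisj
  have h2 := Finset.card_filter_add_card_filter_not (s := M) (p := fun e => Q e)
  omega

end Flip

end HWSDProof
namespace HWSDProof

lemma mem_bundle_iff {n m : ℕ} {Z : Fin m → Option (Fin n)} {d : Fin m} {g : Fin n} :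
    d ∈ bundle Z g ↔ Z d = some g := by simp [bundle]

lemma osp_irrefl {n m : ℕ} {P : Fin m → Fin n → Fin n → Prop}
    (hP : ∀ d, IsStrictTotalOrder (Fin n) (P d)) (d : Fin m) (o : Option (Fin n)) :
    ¬ OptStrictPref P d o o := by
  cases o with
  | none => exact fun hlt => hlt
  | some a =>
    intro hlt
    haveI := hP d
    exact absurd (hlt : P d a a) (irrefl_of (P d) a)

lemma osp_asymm {n m : ℕ} {P : Fin m → Fin n → Fin n → Prop}
    (hP : ∀ d, IsStrictTotalOrder (Fin n) (P d)) (d : Fin m) (o o' : Option (Fin n))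
    (h1 : OptStrictPref P d o o') (h2 : OptStrictPref P d o' o) : False := by
  cases o with
  | none => exact h1
  | some a =>
    cases o' with
    | none => exact h2
    | some b =>
      haveI := hP d
      exact absurd (trans_of (P d) (h1 : P d a b) (h2 : P d b a)) (irrefl_of (P d) a)

end HWSDProof

theorem hwsd_fT_report' {n m : ℕ} (v : Fin n → Finset (Fin m) → ℤ)
    (P : Fin m → Fin n → Fin n → Prop)
    (hv : ∀ h, IsBinaryOXS (v h)) (hP : ∀ d, IsStrictTotalOrder (Fin n) (P d))
    (X : Fin m → Option (Fin n)) (hX : IsHWSDOpt v P X)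
    (h : Fin n) (T : Finset (Fin m)) (hT : T ⊆ bundle X h)
    (Y : Fin m → Option (Fin n))
    (hY : IsHWSDOpt (Function.update v h (fun S => ((S ∩ T).card : ℤ))) P Y) :
    bundle Y h = T := by
  classical
  open HWSDProof in
  set v' := Function.update v h (fun S => ((S ∩ T).card : ℤ)) with hv'def
  -- step 1: Y_h ⊆ T
  have hYsub : bundle Y h ⊆ T := by
    have h1 := hY.1 h
    have h2 : ((bundle Y h ∩ T).card : ℤ) = ((bundle Y h).card : ℤ) := by
      simpa [v', Function.update_self] using h1
    have h3 : (bundle Y h ∩ T).card = (bundle Y h).card := by exact_mod_cast h2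
    have h4 : bundle Y h ∩ T = bundle Y h :=
      Finset.eq_of_subset_of_card_le Finset.inter_subset_left (le_of_eq h3.symm)
    exact fun d hd => (Finset.mem_inter.mp (h4 ▸ hd)).2
  by_contra hne
  obtain ⟨dstar, hdT, hdY⟩ : ∃ d, d ∈ T ∧ d ∉ bundle Y h := by
    by_contra h'
    push_neg at h'
    exact hne (Finset.Subset.antisymm hYsub h')
  have hXd : X dstar = some h := mem_bundle_iff.mp (hT hdT)
  have hYd : Y dstar ≠ some h := fun hc => hdY (mem_bundle_iff.mpr hc)
  -- OXS data
  choose k E spec using hv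
  -- realize X by a global matching M
  choose mg hmgE hmgdoc hmgslot hmgimg using fun g => oxs_saturating (spec g) (hX.1 g)
  obtain ⟨hMisM, hMalloc⟩ :=
    build_global (E := E) (Z := X) (W := mg) hmgE hmgdoc hmgslot hmgimg
  set M : Finset (Edge (m := m) k) := Finset.univ.biUnion (fun g => globalize g (mg g))
    with hMdef
  -- realize Y by a global matching N whose h-part is contained in that of M
  have hYNRg : ∀ g, g ≠ h → v g (bundle Y g) = ((bundle Y g).card : ℤ) := by
    intro g hg
    have h1 := hY.1 g
    rwa [hv'def, Function.update_of_ne hg] at h1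
  have hNex : ∀ g, ∃ W : Finset (Fin m × Fin (k g)),
      (∀ p ∈ W, E g p.1 p.2) ∧
      (∀ p ∈ W, ∀ q ∈ W, p.1 = q.1 → p = q) ∧
      (∀ p ∈ W, ∀ q ∈ W, p.2 = q.2 → p = q) ∧
      W.image Prod.fst = bundle Y g ∧
      (g = h → W ⊆ mg g) := by
    intro g
    by_cases hg : g = h
    · subst hg
      refine ⟨(mg g).filter (fun p => p.1 ∈ bundle Y g), ?_, ?_, ?_, ?_,
        fun _ => Finset.filter_subset _ _⟩
      · exact fun p hp => hmgE g p (Finset.mem_filter.mp hp).1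
      · intro p hp q hq hpq
        exact hmgdoc g p (Finset.mem_filter.mp hp).1 q (Finset.mem_filter.mp hq).1 hpq
      · intro p hp q hq hpq
        exact hmgslot g p (Finset.mem_filter.mp hp).1 q (Finset.mem_filter.mp hq).1 hpq
      · ext d
        rw [Finset.mem_image]
        constructor
        · rintro ⟨p, hp, rfl⟩
          exact (Finset.mem_filter.mp hp).2
        · intro hd
          have hdX : d ∈ bundle X g := hT (hYsub hd)
          rw [← hmgimg g] at hdX
          obtain ⟨p, hp, rfl⟩ := Finset.mem_image.mp hdX
          exact ⟨p, Finset.mem_filter.mpr ⟨hp, hd⟩, rfl⟩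
    · obtain ⟨W, h1, h2, h3, h4⟩ := oxs_saturating (spec g) (hYNRg g hg)
      exact ⟨W, h1, h2, h3, h4, fun hgh => absurd hgh hg⟩
  choose ng hngE hngdoc hngslot hngimg hnghome using hNex
  obtain ⟨hNisM, hNalloc⟩ :=
    build_global (E := E) (Z := Y) (W := ng) hngE hngdoc hngslot hngimg
  set N : Finset (Edge (m := m) k) := Finset.univ.biUnion (fun g => globalize g (ng g))
    with hNdef
  -- home structure facts
  have hF1 : ∀ f ∈ N, f.1 = h → f ∈ M ∧ doc f ∈ bundle Y h := by
    intro f hf hfh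
    have h2 : f.2 ∈ ng f.1 := mem_biUnion_globalize.mp hf
    obtain ⟨g, p⟩ := f
    cases hfh
    refine ⟨mem_biUnion_globalize.mpr (hnghome g rfl h2), ?_⟩
    have : p.1 ∈ (ng g).image Prod.fst := Finset.mem_image_of_mem _ h2
    rwa [hngimg g] at this
  have hF2 : ∀ e ∈ M, e.1 = h → doc e ∈ bundle X h := by
    intro e he heh
    have h2 : e.2 ∈ mg e.1 := mem_biUnion_globalize.mp he
    obtain ⟨g, p⟩ := e
    cases heh
    have : p.1 ∈ (mg g).image Prod.fst := Finset.mem_image_of_mem _ h2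
    rwa [hmgimg g] at this
  -- the seed edge
  have hdX' : dstar ∈ bundle X h := hT hdT
  rw [← hmgimg h] at hdX'
  obtain ⟨pst, hpst, hpd⟩ := Finset.mem_image.mp hdX'
  set seed : Edge (m := m) k := ⟨h, pst⟩ with hseeddef
  have hseedM : seed ∈ M := mem_biUnion_globalize.mpr hpst
  have hseeddoc : doc seed = dstar := hpd
  have hexp : ∀ f ∈ N, ¬ sameSlot f seed := by
    intro f hf hs
    have hfh : f.1 = h := hs.1
    obtain ⟨hfM, hfY⟩ := hF1 f hf hfh
    have : f = seed := hMisM.2.2 f hfM seed hseedM hs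
    rw [this, hseeddoc] at hfY
    exact hdY hfY
  have hseedN : seed ∉ N := fun hc => hexp seed hc (sameSlot_refl seed)
  -- the orbit and the two flips
  set Q : Edge (m := m) k → Prop := inP M N seed with hQdef
  have hQseed : Q seed := inP_seed
  have hcl : ∀ {e f : Edge (m := m) k}, Q e → (f ∈ M ∨ f ∈ N) → f ≠ e →
      (doc f = doc e ∨ sameSlot f e) → Q f :=
    fun he hf hfe hadj => inP_closed hMisM hNisM hseedM hseedN hexp he hf hfe hadj
  have hcl' : ∀ {e f : Edge (m := m) k}, Q e → (f ∈ N ∨ f ∈ M) → f ≠ e →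
      (doc f = doc e ∨ sameSlot f e) → Q f :=
    fun he hf hfe hadj => hcl he hf.symm hfe hadj
  have hsides : ∀ {e : Edge (m := m) k}, Q e → (e ∈ M ∨ e ∈ N) := by
    intro e he
    rcases inP_sides hMisM hNisM hseedM hseedN he with ⟨h1, -⟩ | ⟨h1, -⟩
    · exact Or.inl h1
    · exact Or.inr h1
  have hVisM : IsM E (flip M N Q) := flip_isM hMisM hNisM @hcl
  have hWisM : IsM E (flip N M Q) := flip_isM hNisM hMisM @hcl'
  set allocV := alloc (flip M N Q) with hVdef
  set allocW := alloc (flip N M Q) with hWdef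
  -- alloc values of the flips
  have hVval : ∀ d : Fin m, (∃ e, Q e ∧ doc e = d) → allocV d = Y d := by
    rintro d ⟨e, he, hde⟩
    rw [hVdef, alloc_flip_of_mem hMisM hNisM @hcl he (hsides he) hde, hNalloc]
  have hVval' : ∀ d : Fin m, ¬ (∃ e, Q e ∧ doc e = d) → allocV d = X d := by
    intro d hd
    rw [hVdef, alloc_flip_of_not hMisM hNisM @hcl (fun e heQ hde => hd ⟨e, heQ, hde⟩), hMalloc]
  have hWval : ∀ d : Fin m, (∃ e, Q e ∧ doc e = d) → allocW d = X d := by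
    rintro d ⟨e, he, hde⟩
    rw [hWdef, alloc_flip_of_mem hNisM hMisM @hcl' he (hsides he).symm hde, hMalloc]
  have hWval' : ∀ d : Fin m, ¬ (∃ e, Q e ∧ doc e = d) → allocW d = Y d := by
    intro d hd
    rw [hWdef, alloc_flip_of_not hNisM hMisM @hcl' (fun e heQ hde => hd ⟨e, heQ, hde⟩), hNalloc]
  have hdstarQ : ∃ e, Q e ∧ doc e = dstar := ⟨seed, hQseed, hseeddoc⟩
  -- non-redundancy of the flip allocations
  have hVNR : NonRedundant v allocV := fun g => val_bundle hVisM g (spec g)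
  have hWsubT : bundle allocW h ⊆ T := by
    intro d hd
    obtain ⟨e, he, hde, heh⟩ := (mem_bundle_alloc hWisM).mp hd
    rcases mem_flip.mp he with ⟨h1, -⟩ | ⟨h1, h2⟩
    · exact hYsub ((hde ▸ (hF1 e h1 heh).2 : d ∈ bundle Y h))
    · by_contra hdT'
      have hexpe : ∀ f ∈ N, ¬ sameSlot f e := by
        intro f hf hs
        obtain ⟨hfM, hfY⟩ := hF1 f hf (hs.1.trans heh)
        have : f = e := hMisM.2.2 f hfM e h1 hs
        rw [this, hde] at hfY
        exact hdT' (hYsub hfY)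
      have : e = seed := inP_noseed hMisM hNisM hseedM hseedN h2 h1 hexpe
      rw [this, hseeddoc] at hde
      exact hdT' (hde ▸ hdT)
  have hWNR : NonRedundant v' allocW := by
    intro g
    by_cases hg : g = h
    · subst hg
      have hsub := hWsubT
      have : bundle allocW g ∩ T = bundle allocW g := Finset.inter_eq_left.mpr hsub
      simp only [hv'def, Function.update_self]
      rw [this]
    · have : v' g = v g := by rw [hv'def]; exact Function.update_of_ne hg _ v
      rw [this]
      exact val_bundle hWisM g (spec g)
  -- the flips differ from the optima
  have hVneX : allocV ≠ X := by
    intro hc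
    have := hVval dstar hdstarQ
    rw [hc, hXd] at this
    exact hYd this.symm
  have hWneY : allocW ≠ Y := by
    intro hc
    have := hWval dstar hdstarQ
    rw [hc, hXd] at this
    exact hYd this
  -- welfare computations
  have hUX : USW v X = (M.card : ℤ) := by
    rw [← hMalloc]
    exact usw_alloc hMisM (hMalloc ▸ hX.1)
  have hUY : USW v' Y = (N.card : ℤ) := by
    rw [← hNalloc]
    exact usw_alloc hNisM (hNalloc ▸ hY.1)
  have hUV : USW v allocV = ((flip M N Q).card : ℤ) := usw_alloc hVisM hVNR
  have hUW : USW v' allocW = ((flip N M Q).card : ℤ) := usw_alloc hWisM hWNR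
  have hsum : (flip M N Q).card + (flip N M Q).card = M.card + N.card := by
    have h1 := flip_card (M := M) (N := N) (Q := Q)
    have h2 := flip_card (M := N) (N := M) (Q := Q)
    omega
  -- apply optimality
  have hgtV := hX.2 allocV hVNR hVneX
  have hgtW : HWSDgt v' P Y allocW := hY.2 allocW hWNR hWneY
  -- resolve the welfare dichotomies
  have hVle : (HWSDProof.flip M N Q).card ≤ M.card := by
    rcases hgtV with hlt | ⟨heq, -⟩
    · rw [hUX, hUV] at hlt
      exact_mod_cast le_of_lt hlt
    · rw [hUX, hUV] at heq
      exact le_of_eq (by exact_mod_cast heq.symm)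
  have hWle : (HWSDProof.flip N M Q).card ≤ N.card := by
    rcases hgtW with hlt | ⟨heq, -⟩
    · rw [hUY, hUW] at hlt
      exact_mod_cast le_of_lt hlt
    · rw [hUY, hUW] at heq
      exact le_of_eq (by exact_mod_cast heq.symm)
  have hVeq : (HWSDProof.flip M N Q).card = M.card := by omega
  have hWeq : (HWSDProof.flip N M Q).card = N.card := by omega
  obtain ⟨j₁, hj₁pref, hj₁min⟩ : ∃ j : Fin m,
      OptStrictPref P j (X j) (allocV j) ∧ ∀ k : Fin m, k < j → X k = allocV k := by
    rcases hgtV with hlt | ⟨-, hj⟩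
    · rw [hUX, hUV] at hlt
      have h1 : (HWSDProof.flip M N Q).card < M.card := by exact_mod_cast hlt
      omega
    · exact hj
  obtain ⟨j₂, hj₂pref, hj₂min⟩ : ∃ j : Fin m,
      OptStrictPref P j (Y j) (allocW j) ∧ ∀ k : Fin m, k < j → Y k = allocW k := by
    rcases hgtW with hlt | ⟨-, hj⟩
    · rw [hUY, hUW] at hlt
      have h1 : (HWSDProof.flip N M Q).card < N.card := by exact_mod_cast hlt
      omega
    · exact hj
  -- the difference set
  set D : Fin m → Prop := fun d => (∃ e, Q e ∧ doc e = d) ∧ X d ≠ Y d with hDdef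
  have hdiffV : ∀ d, allocV d ≠ X d ↔ D d := by
    intro d
    by_cases hQd : ∃ e, Q e ∧ doc e = d
    · rw [hVval d hQd]
      constructor
      · intro hne'
        exact ⟨hQd, fun hXY => hne' hXY.symm⟩
      · rintro ⟨-, hne'⟩
        exact fun hc => hne' hc.symm
    · rw [hVval' d hQd]
      constructor
      · intro hne'; exact absurd rfl hne'
      · rintro ⟨hQ', -⟩; exact absurd hQ' hQd
  have hdiffW : ∀ d, allocW d ≠ Y d ↔ D d := by
    intro d
    by_cases hQd : ∃ e, Q e ∧ doc e = d
    · rw [hWval d hQd]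
      constructor
      · intro hne'; exact ⟨hQd, hne'⟩
      · rintro ⟨-, hne'⟩; exact hne'
    · rw [hWval' d hQd]
      constructor
      · intro hne'; exact absurd rfl hne'
      · rintro ⟨hQ', -⟩; exact absurd hQ' hQd
  -- both lexicographic witnesses are the minimum of D
  have hDj₁ : D j₁ := (hdiffV j₁).mp
    (fun hc => osp_irrefl hP j₁ (X j₁) (by rw [← hc] at hj₁pref ⊢; exact hj₁pref))
  have hDj₂ : D j₂ := (hdiffW j₂).mp
    (fun hc => osp_irrefl hP j₂ (Y j₂) (by rw [← hc] at hj₂pref ⊢; exact hj₂pref))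
  have hj₁₂ : j₁ = j₂ := by
    by_contra hc
    rcases lt_or_gt_of_ne hc with hlt | hlt
    · exact ((hdiffW j₁).mpr hDj₁) (hj₂min j₁ hlt).symm
    · exact ((hdiffV j₂).mpr hDj₂) (hj₁min j₂ hlt).symm
  subst hj₁₂
  have hV₁ : allocV j₁ = Y j₁ := hVval j₁ hDj₁.1
  have hW₁ : allocW j₁ = X j₁ := hWval j₁ hDj₁.1
  rw [hV₁] at hj₁pref
  rw [hW₁] at hj₂pref
  exact osp_asymm hP j₁ (X j₁) (Y j₁) hj₁pref hj₂pref

/-- Lemma 3.3: with binary OXS hospital valuations, if hospital `h` reports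
`f_T S = |S ∩ T|` for some `T ⊆ X_h` (where `X` is the truthful HWSD output) instead
of `v h`, then the HWSD output `Y` for the misreported profile satisfies `Y_h = T`. -/
theorem hwsd_fT_report {n m : ℕ} (v : Fin n → Finset (Fin m) → ℤ)
    (P : Fin m → Fin n → Fin n → Prop)
    (hv : ∀ h, IsBinaryOXS (v h)) (hP : ∀ d, IsStrictTotalOrder (Fin n) (P d))
    (X : Fin m → Option (Fin n)) (hX : IsHWSDOpt v P X)
    (h : Fin n) (T : Finset (Fin m)) (hT : T ⊆ bundle X h)
    (Y : Fin m → Option (Fin n))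
    (hY : IsHWSDOpt (Function.update v h (fun S => ((S ∩ T).card : ℤ))) P Y) :
    bundle Y h = T := by
  exact hwsd_fT_report' v P hv hP X hX h T hT Y hY
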